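/- Let N be a square-free positive integer and let S ⊆ (Z/NZ)^n be a Kakeya set. Then the t-fold Cartesian product S^t ⊆ (Z/NZ)^{tn} is also a Kakeya set. -/

import Mathlib

/-- A direction in `(Z/NZ)^ι`: a vector whose reduction modulo every prime factor of `N`
is non-zero. -/
def IsDirection {N : ℕ} {ι : Type*} (b : ι → ZMod N) : Prop :=
  ∀ (q : ℕ), q.Prime → ∀ (h : q ∣ N), (fun i => ZMod.castHom h (ZMod q) (b i)) ≠ 0

/-- A Kakeya set in `(Z/NZ)^ι`: contains a line in every direction. -/
def IsKakeyaSet {N : ℕ} {ι : Type*} (S : Set (ι → ZMod N)) : Prop :=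
  ∀ b : ι → ZMod N, IsDirection b →
    ∃ a : ι → ZMod N, ∀ t : ZMod N, a + t • b ∈ S

namespace KakeyaAux

/-- CRT isomorphism for squarefree `N`. -/
noncomputable def phi {N : ℕ} (hN : Squarefree N) :
    ZMod N ≃+* Π q : N.primeFactors, ZMod (q : ℕ) :=
  (ZMod.ringEquivCongr
      ((Finset.prod_coe_sort N.primeFactors _).trans
        (Nat.prod_primeFactors_of_squarefree hN)).symm).trans
    (ZMod.prodEquivPi _ (fun i j hij =>
      (Nat.coprime_primes (Nat.prime_of_mem_primeFactors i.2)
        (Nat.prime_of_mem_primeFactors j.2)).mpr (fun h => hij (Subtype.ext h))))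

lemma phi_apply {N : ℕ} (hN : Squarefree N) (x : ZMod N) (q : N.primeFactors) :
    phi hN x q = ZMod.castHom (Nat.dvd_of_mem_primeFactors q.2) (ZMod (q : ℕ)) x :=
  RingHom.congr_fun
    (RingHom.ext_zmod ((Pi.evalRingHom _ q).comp (phi hN).toRingHom)
      (ZMod.castHom _ _)) x

end KakeyaAux

/-- For square-free `N`, the `t`-fold product of a Kakeya set in `(Z/NZ)^n`
is a Kakeya set in `(Z/NZ)^{tn}`. -/
theorem isKakeyaSet_product
    {N : ℕ} (hN : Squarefree N) {n t : ℕ} (S : Set (Fin n → ZMod N))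
    (hS : IsKakeyaSet S) :
    IsKakeyaSet {f : Fin t × Fin n → ZMod N |
      ∀ j : Fin t, (fun i : Fin n => f (j, i)) ∈ S} := by
  classical
  intro b hb
  set P := N.primeFactors with hP
  have hd : ∀ q : P, (q : ℕ) ∣ N := fun q => Nat.dvd_of_mem_primeFactors q.2
  let φ := KakeyaAux.phi hN
  -- the "degeneracy" predicate
  let Z : P → Fin t → Prop := fun q j =>
    (fun i => ZMod.castHom (hd q) (ZMod (q : ℕ)) (b (j, i))) = 0
  -- for each prime q choose a coordinate block where b is nonzero mod q
  have hwit : ∀ q : P, ∃ j : Fin t,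
      (fun i => ZMod.castHom (hd q) (ZMod (q : ℕ)) (b (j, i))) ≠ 0 := by
    intro q
    by_contra h
    push_neg at h
    apply hb (q : ℕ) (Nat.prime_of_mem_primeFactors q.2) (hd q)
    funext p
    exact congrFun (h p.1) p.2
  choose j0 hj0 using hwit
  -- the corrected directions
  let c : Fin t → Fin n → ZMod N := fun j i =>
    φ.symm (fun q => if Z q j then ZMod.castHom (hd q) (ZMod (q : ℕ)) (b (j0 q, i))
      else ZMod.castHom (hd q) (ZMod (q : ℕ)) (b (j, i)))
  have key : ∀ (j : Fin t) (i : Fin n) (q : P),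
      ZMod.castHom (hd q) (ZMod (q : ℕ)) (c j i) =
        if Z q j then ZMod.castHom (hd q) (ZMod (q : ℕ)) (b (j0 q, i))
        else ZMod.castHom (hd q) (ZMod (q : ℕ)) (b (j, i)) := by
    intro j i q
    rw [← KakeyaAux.phi_apply hN]
    show φ (φ.symm _) q = _
    rw [RingEquiv.apply_symm_apply]
  have hc : ∀ j : Fin t, IsDirection (c j) := by
    intro j q hq hqN
    have hqP : q ∈ P := Nat.mem_primeFactors.mpr ⟨hq, hqN, hN.ne_zero⟩
    let q' : P := ⟨q, hqP⟩
    intro h0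
    have h0' : ∀ i, ZMod.castHom (hd q') (ZMod (q' : ℕ)) (c j i) = 0 := fun i => congrFun h0 i
    by_cases hz : Z q' j
    · apply hj0 q'
      funext i
      have hi := h0' i
      rw [key j i q', if_pos hz] at hi
      exact hi
    · apply hz
      funext i
      have hi := h0' i
      rw [key j i q', if_neg hz] at hi
      exact hi
  choose a ha using fun j => hS (c j) (hc j)
  refine ⟨fun p => a p.1 p.2, ?_⟩
  intro s j
  -- the reparametrized time
  let s' : ZMod N := φ.symm (fun q => if Z q j then 0
    else ZMod.castHom (hd q) (ZMod (q : ℕ)) s)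
  have hs' : ∀ q : P, ZMod.castHom (hd q) (ZMod (q : ℕ)) s' =
      if Z q j then 0 else ZMod.castHom (hd q) (ZMod (q : ℕ)) s := by
    intro q
    rw [← KakeyaAux.phi_apply hN]
    show φ (φ.symm _) q = _
    rw [RingEquiv.apply_symm_apply]
  have hline : (fun i : Fin n => ((fun p : Fin t × Fin n => a p.1 p.2) + s • b) (j, i)) =
      a j + s' • c j := by
    funext i
    show a j i + s * b (j, i) = a j i + s' * c j i
    congr 1
    apply φ.injective
    funext q
    simp only [φ, map_mul, KakeyaAux.phi_apply hN, hs', key]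
    by_cases hz : Z q j
    · have hb0 : ZMod.castHom (hd q) (ZMod (q : ℕ)) (b (j, i)) = 0 := congrFun hz i
      simp only [if_pos hz, hb0, mul_zero, zero_mul]
    · simp only [if_neg hz]
  show (fun i : Fin n => _) ∈ S
  rw [hline]
  exact ha j s'
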